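/- Let G = (V,E) be a graph and let ◁ be a well-founded ramified strict partial order on V such that {u ∈ V : u ◁ v} is countable for every v ∈ V (so (V, ◁) is a tree of height at most ω1), and assume that any two adjacent vertices of G are ◁-comparable. Suppose Player II has a winning strategy in the game 𝔾_χ(G) of length ω1; that is, suppose there is a function σ assigning to every ordinal η < ω1 and every sequence ⟨v_α : α ≤ η⟩ of vertices a natural number, such that for every ω1-sequence ⟨v_α : α < ω1⟩ of vertices, setting c_α = σ(⟨v_β : β ≤ α⟩), we have c_α ≠ c_β whenever α < β < ω1 and v_α is adjacent to v_β in G. Then χ(G) ≤ ℵ0. -/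

import Mathlib

open Cardinal

universe u

section Aux

variable {V : Type u} (lt : V → V → Prop)

def brSet (v : V) : Set V := {u : V | lt u v}

variable (hso : IsStrictOrder V lt) (hwf : WellFounded lt)
  (hram : ∀ v u w : V, lt u v → lt w v → (lt u w ∨ u = w ∨ lt w u))

include hso hwf hram in
theorem brWO (v : V) : IsWellOrder (brSet lt v) (Subrel lt (· ∈ brSet lt v)) := by
  haveI h1 : IsTrichotomous (brSet lt v) (Subrel lt (· ∈ brSet lt v)) := by
    constructor
    rintro ⟨a, ha⟩ ⟨b, hb⟩
    intro h₁ h₂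
    rcases hram v a b ha hb with h | h | h
    · exact absurd h h₁
    · exact Subtype.ext h
    · exact absurd h h₂
  haveI h2 : IsTrans (brSet lt v) (Subrel lt (· ∈ brSet lt v)) :=
    ⟨fun a b c hab hbc => hso.toIsTrans.trans a.1 b.1 c.1 hab hbc⟩
  haveI h3 : IsWellFounded (brSet lt v) (Subrel lt (· ∈ brSet lt v)) :=
    ⟨(Subrel.relEmbedding lt (brSet lt v)).wellFounded hwf⟩
  exact ⟨⟩

noncomputable def brType (v : V) : Ordinal.{u} :=
  @Ordinal.type (brSet lt v) (Subrel lt (· ∈ brSet lt v)) (brWO lt hso hwf hram v)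

include hso hwf hram in
theorem brTypein_eq (v u : V) (h : lt u v) :
    @Ordinal.typein _ (Subrel lt (· ∈ brSet lt v)) (brWO lt hso hwf hram v) ⟨u, h⟩ =
      brType lt hso hwf hram u := by
  letI := brWO lt hso hwf hram v
  letI := brWO lt hso hwf hram u
  rw [← Ordinal.type_subrel]
  exact Ordinal.type_eq.2 ⟨⟨⟨fun x => ⟨x.1.1, x.2⟩,
    fun y => ⟨⟨y.1, hso.toIsTrans.trans _ _ _ y.2 h⟩, y.2⟩,
    fun x => rfl, fun y => rfl⟩, Iff.rfl⟩⟩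

include hso hwf hram in
theorem brType_lt (u v : V) (h : lt u v) :
    brType lt hso hwf hram u < brType lt hso hwf hram v := by
  letI := brWO lt hso hwf hram v
  rw [← brTypein_eq lt hso hwf hram v u h]
  exact Ordinal.typein_lt_type _ _

include hso hwf hram in
theorem brType_lt_omega1 (hctbl : ∀ v : V, {u : V | lt u v}.Countable) (v : V) :
    brType lt hso hwf hram v < (aleph 1).ord := by
  letI := brWO lt hso hwf hram v
  rw [Cardinal.lt_ord]
  have h1 : Cardinal.mk (brSet lt v) ≤ aleph0 := (hctbl v).le_aleph0
  have h2 : (brType lt hso hwf hram v).card = Cardinal.mk (brSet lt v) :=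
    Ordinal.card_type _
  exact h2.trans_lt (h1.trans_lt Cardinal.aleph0_lt_aleph_one)

noncomputable def brSeq (v : V) (γ : Ordinal.{u}) : V :=
  if h : γ < brType lt hso hwf hram v then
    (@Ordinal.enum _ (Subrel lt (· ∈ brSet lt v)) (brWO lt hso hwf hram v) ⟨γ, h⟩).1
  else v

theorem brSeq_self (v : V) : brSeq lt hso hwf hram v (brType lt hso hwf hram v) = v :=
  dif_neg (lt_irrefl _)

include hso hwf hram in
theorem brSeq_typein (v u : V) (h : lt u v) :
    brSeq lt hso hwf hram v (brType lt hso hwf hram u) = u := by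
  letI := brWO lt hso hwf hram v
  have hlt : brType lt hso hwf hram u < brType lt hso hwf hram v :=
    brType_lt lt hso hwf hram u v h
  rw [brSeq, dif_pos hlt]
  have h1 := brTypein_eq lt hso hwf hram v u h
  have h2 : Ordinal.enum (Subrel lt (· ∈ brSet lt v)) ⟨brType lt hso hwf hram u, hlt⟩
      = ⟨u, h⟩ := by
    apply Ordinal.typein_injective (Subrel lt (· ∈ brSet lt v))
    rw [Ordinal.typein_enum _ hlt]
    exact h1.symm
  rw [h2]

include hso hwf hram in
theorem brSeq_agree (v u : V) (h : lt u v) (γ : Ordinal.{u})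
    (hγ : γ ≤ brType lt hso hwf hram u) :
    brSeq lt hso hwf hram u γ = brSeq lt hso hwf hram v γ := by
  rcases eq_or_lt_of_le hγ with rfl | hγ
  · rw [brSeq_self, brSeq_typein lt hso hwf hram v u h]
  · letI := brWO lt hso hwf hram u
    letI := brWO lt hso hwf hram v
    have hγv : γ < brType lt hso hwf hram v := hγ.trans (brType_lt lt hso hwf hram u v h)
    rw [brSeq, dif_pos hγ, brSeq, dif_pos hγv]
    set x := Ordinal.enum (Subrel lt (· ∈ brSet lt u)) ⟨γ, hγ⟩ with hx
    have hxu : lt x.1 u := x.2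
    have hxv : lt x.1 v := hso.toIsTrans.trans _ _ _ hxu h
    have t1 : Ordinal.typein (Subrel lt (· ∈ brSet lt u)) x = brType lt hso hwf hram x.1 :=
      brTypein_eq lt hso hwf hram u x.1 hxu
    have t2 : Ordinal.typein (Subrel lt (· ∈ brSet lt v)) ⟨x.1, hxv⟩ =
        brType lt hso hwf hram x.1 :=
      brTypein_eq lt hso hwf hram v x.1 hxv
    have t3 : Ordinal.typein (Subrel lt (· ∈ brSet lt u)) x = γ := Ordinal.typein_enum _ _
    have h2 : Ordinal.enum (Subrel lt (· ∈ brSet lt v)) ⟨γ, hγv⟩ = ⟨x.1, hxv⟩ := by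
      apply Ordinal.typein_injective (Subrel lt (· ∈ brSet lt v))
      rw [Ordinal.typein_enum _ hγv, t2, ← t1, t3]
    rw [h2]

end Aux

/-- The set of ordinals below `ω₁`, used to index plays of length `ω₁`. -/
def OrdBelowOmega1 : Type (u + 1) :=
  {o : Ordinal.{u} // o < (aleph 1).ord}

/-- If `G` is a graph whose adjacent vertices are comparable in a well-founded
ramified strict partial order `◁` with countable sets of strict predecessors
(a tree of height at most `ω₁`), and Player II has a winning strategy `σ` in the
coloring game `𝔾_χ(G)` of length `ω₁` (in round `α` Player I plays a vertex `v_α`,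
Player II answers with a natural number `c_α`, and Player II wins provided
`c_α ≠ c_β` whenever `α < β` and `v_α` is adjacent to `v_β`), then `χ(G) ≤ ℵ₀`. -/
theorem winning_strategy_ctbl_chromatic {V : Type u} (G : SimpleGraph V)
    (lt : V → V → Prop)
    (hso : IsStrictOrder V lt)
    (hwf : WellFounded lt)
    (hram : ∀ v u w : V, lt u v → lt w v → (lt u w ∨ u = w ∨ lt w u))
    (hctbl : ∀ v : V, {u : V | lt u v}.Countable)
    (hadj : ∀ u v : V, G.Adj u v → (lt u v ∨ lt v u))
    (σ : (η : OrdBelowOmega1.{u}) → ({α : OrdBelowOmega1.{u} // α.1 ≤ η.1} → V) → ℕ)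
    (hσ : ∀ v : OrdBelowOmega1.{u} → V, ∀ α β : OrdBelowOmega1.{u},
      α.1 < β.1 → G.Adj (v α) (v β) →
        σ α (fun γ => v γ.1) ≠ σ β (fun γ => v γ.1)) :
    ∃ c : V → ℕ, ∀ u v : V, G.Adj u v → c u ≠ c v := by
  classical
  have hlt1 : ∀ v : V, brType lt hso hwf hram v < (aleph 1).ord :=
    brType_lt_omega1 lt hso hwf hram hctbl
  let η : V → OrdBelowOmega1.{u} := fun v => ⟨brType lt hso hwf hram v, hlt1 v⟩
  refine ⟨fun v => σ (η v) (fun γ => brSeq lt hso hwf hram v γ.1.1), ?_⟩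
  have main : ∀ u v : V, G.Adj u v → lt u v →
      σ (η u) (fun γ => brSeq lt hso hwf hram u γ.1.1) ≠
        σ (η v) (fun γ => brSeq lt hso hwf hram v γ.1.1) := by
    intro u v hA h
    have hAdj : G.Adj (brSeq lt hso hwf hram v (η u).1)
        (brSeq lt hso hwf hram v (η v).1) := by
      show G.Adj (brSeq lt hso hwf hram v (brType lt hso hwf hram u))
        (brSeq lt hso hwf hram v (brType lt hso hwf hram v))
      rw [brSeq_self, brSeq_typein lt hso hwf hram v u h]
      exact hA
    have key := hσ (fun γ => brSeq lt hso hwf hram v γ.1) (η u) (η v)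
      (brType_lt lt hso hwf hram u v h) hAdj
    have e : (fun γ : {α : OrdBelowOmega1.{u} // α.1 ≤ (η u).1} =>
        brSeq lt hso hwf hram u γ.1.1) = fun γ => brSeq lt hso hwf hram v γ.1.1 :=
      funext fun γ => brSeq_agree lt hso hwf hram v u h γ.1.1 γ.2
    rw [e]
    exact key
  intro u v hA
  rcases hadj u v hA with h | h
  · exact main u v hA h
  · exact (main v u (G.symm.symm _ _ hA) h).symm
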